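/- With V^r, V¹ the explicit solutions above, if ∫_{r₀}^∞ s^{1−ℓ} f(s) ds = 0 then as r → ∞ both V^r(r) → 0 and V¹(r) → 0, provided additionally that r^{2+ℓ}|f| has growth such that r^{−2−ℓ}∫_{r₀}^r s^{2+ℓ}|f(s)|ds → 0 (e.g. f(s) = O(s^{−3−ε}) for some ε > 0). -/

import Mathlib

open MeasureTheory Real Filter
noncomputable section

section Aux
open intervalIntegral Set

lemma aux_abs_int (r₀ r a : ℝ) (hr₀ : 0 < r₀) (f : ℝ → ℝ) :
    |∫ s in Set.Ioc r₀ r, s ^ a * f s| ≤ ∫ s in Set.Ioc r₀ r, s ^ a * |f s| := by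
  calc |∫ s in Set.Ioc r₀ r, s ^ a * f s| ≤ ∫ s in Set.Ioc r₀ r, ‖s ^ a * f s‖ := by
        simpa using norm_integral_le_integral_norm (μ := volume.restrict (Set.Ioc r₀ r))
          (fun s => s ^ a * f s)
    _ = ∫ s in Set.Ioc r₀ r, s ^ a * |f s| := by
        apply setIntegral_congr_fun measurableSet_Ioc
        intro s hs
        have hs0 : (0:ℝ) ≤ s := (hr₀.trans hs.1).le
        simp [Real.norm_eq_abs, abs_mul, abs_of_nonneg (Real.rpow_nonneg hs0 a)]


lemma aux_Gderiv (r₀ a : ℝ) (hr₀ : 0 < r₀) (f : ℝ → ℝ) (hf : ContinuousOn f (Set.Ici r₀))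
    {x : ℝ} (hx : r₀ < x) :
    HasDerivAt (fun y => ∫ s in r₀..y, s ^ a * f s) (x ^ a * f x) x := by
  have hPc : ContinuousOn (fun s : ℝ => s ^ a * f s) (Set.Ici r₀) := by
    apply ContinuousOn.mul _ hf
    exact continuousOn_id.rpow_const (fun s hs => Or.inl (ne_of_gt (hr₀.trans_le hs)))
  apply intervalIntegral.integral_hasDerivAt_right
  · apply (hPc.mono _).intervalIntegrable
    rw [Set.uIcc_of_le hx.le]; exact Set.Icc_subset_Ici_self
  · exact ContinuousOn.stronglyMeasurableAtFilter isOpen_Ioi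
      (hPc.mono Set.Ioi_subset_Ici_self) x hx
  · exact hPc.continuousAt (Ici_mem_nhds hx)

lemma aux_ibp (r₀ a c : ℝ) (hr₀ : 0 < r₀) (f : ℝ → ℝ) (hf : ContinuousOn f (Set.Ici r₀))
    (r R : ℝ) (hr : r₀ < r) (hrR : r ≤ R) :
    ∫ x in r..R, x ^ (a - c) * f x =
      (R ^ (-c) * ∫ s in r₀..R, s ^ a * f s) - (r ^ (-c) * ∫ s in r₀..r, s ^ a * f s)
        + c * ∫ x in r..R, x ^ (-c - 1) * ∫ s in r₀..x, s ^ a * f s := by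
  set P : ℝ → ℝ := fun s => s ^ a * f s with hP
  set G : ℝ → ℝ := fun x => ∫ s in r₀..x, P s with hG
  have hPc : ContinuousOn P (Set.Ici r₀) := by
    apply ContinuousOn.mul _ hf
    exact continuousOn_id.rpow_const (fun s hs => Or.inl (ne_of_gt (hr₀.trans_le hs)))
  have hPi : ∀ x, r₀ ≤ x → IntervalIntegrable P volume r₀ x := by
    intro x hx
    apply (hPc.mono _).intervalIntegrable
    rw [Set.uIcc_of_le hx]; exact Set.Icc_subset_Ici_self
  have hGd : ∀ x, r₀ < x → HasDerivAt G (P x) x := by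
    intro x hx
    exact integral_hasDerivAt_right (hPi x hx.le)
      (ContinuousOn.stronglyMeasurableAtFilter isOpen_Ioi
        (hPc.mono Set.Ioi_subset_Ici_self) x hx)
      (hPc.continuousAt (Ici_mem_nhds hx))
  set φ : ℝ → ℝ := fun x => x ^ (-c) * G x with hφ
  set D : ℝ → ℝ := fun x => (-c * x ^ (-c - 1)) * G x + x ^ (-c) * P x with hD
  have hφd : ∀ x, r₀ < x → HasDerivAt φ (D x) x := by
    intro x hx
    have h1 : HasDerivAt (fun y : ℝ => y ^ (-c)) (-c * x ^ (-c - 1)) x :=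
      Real.hasDerivAt_rpow_const (Or.inl (ne_of_gt (hr₀.trans hx)))
    exact h1.mul (hGd x hx)
  have hGc : ContinuousOn G (Set.Ioi r₀) := fun x hx =>
    ((hGd x hx).continuousAt).continuousWithinAt
  have hIccIoi : Set.Icc r R ⊆ Set.Ioi r₀ := fun x hx => lt_of_lt_of_le hr hx.1
  have hDc : ContinuousOn D (Set.Icc r R) := by
    apply ContinuousOn.add
    · exact (ContinuousOn.mul continuousOn_const
        ((continuousOn_id.rpow_const (fun x hx => Or.inl
          (ne_of_gt (hr₀.trans (hIccIoi hx))))))).mul (hGc.mono hIccIoi)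
    · exact (continuousOn_id.rpow_const (fun x hx => Or.inl
        (ne_of_gt (hr₀.trans (hIccIoi hx))))).mul
        (hPc.mono fun x hx => Set.mem_Ici.mpr (le_of_lt (hIccIoi hx)))
  have key : ∫ x in r..R, D x = φ R - φ r := by
    apply integral_eq_sub_of_hasDerivAt
    · intro x hx
      rw [Set.uIcc_of_le hrR] at hx
      exact hφd x (hIccIoi hx)
    · apply ContinuousOn.intervalIntegrable
      rwa [Set.uIcc_of_le hrR]
  have hint1 : IntervalIntegrable (fun x => (-c * x ^ (-c-1)) * G x) volume r R := by
    apply ContinuousOn.intervalIntegrable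
    rw [Set.uIcc_of_le hrR]
    exact (ContinuousOn.mul continuousOn_const
        ((continuousOn_id.rpow_const (fun x hx => Or.inl
          (ne_of_gt (hr₀.trans (hIccIoi hx))))))).mul (hGc.mono hIccIoi)
  have hint2 : IntervalIntegrable (fun x => x ^ (-c) * P x) volume r R := by
    apply ContinuousOn.intervalIntegrable
    rw [Set.uIcc_of_le hrR]
    exact (continuousOn_id.rpow_const (fun x hx => Or.inl
        (ne_of_gt (hr₀.trans (hIccIoi hx))))).mul
        (hPc.mono fun x hx => Set.mem_Ici.mpr (le_of_lt (hIccIoi hx)))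
  have hsplit : ∫ x in r..R, D x =
      (∫ x in r..R, (-c * x ^ (-c-1)) * G x) + ∫ x in r..R, x ^ (-c) * P x :=
    integral_add hint1 hint2
  have heq2 : ∀ x ∈ Set.Icc r R, x ^ (-c) * P x = x ^ (a - c) * f x := by
    intro x hx
    have hx0 : (0:ℝ) < x := hr₀.trans (hIccIoi hx)
    rw [hP]
    rw [← mul_assoc, ← Real.rpow_add hx0]
    ring_nf
  have heq2' : (∫ x in r..R, x ^ (-c) * P x) = ∫ x in r..R, x ^ (a - c) * f x := by
    apply integral_congr
    intro x hx
    rw [Set.uIcc_of_le hrR] at hx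
    exact heq2 x hx
  have heq3 : (∫ x in r..R, (-c * x ^ (-c-1)) * G x)
      = -c * ∫ x in r..R, x ^ (-c-1) * G x := by
    rw [← intervalIntegral.integral_const_mul]
    apply integral_congr
    intro x _
    ring
  have : φ R - φ r = (∫ x in r..R, (-c * x ^ (-c-1)) * G x) + ∫ x in r..R, x ^ (a-c) * f x := by
    rw [← key, hsplit, heq2']
  rw [heq3] at this
  have hGR : G R = ∫ s in r₀..R, s ^ a * f s := rfl
  have hGr : G r = ∫ s in r₀..r, s ^ a * f s := rfl
  rw [hφ] at this
  simp only [hGR, hGr] at this ⊢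
  linarith [this]

lemma aux_tail2 (ℓ : ℕ) (hℓ : 2 ≤ ℓ) (r₀ : ℝ) (hr₀ : 0 < r₀) (f : ℝ → ℝ)
    (hf : ContinuousOn f (Set.Ici r₀))
    (hint : IntegrableOn (fun s => s ^ ((1 : ℝ) - (ℓ : ℝ)) * f s) (Set.Ioi r₀))
    (hgrow : Tendsto
      (fun r => r ^ (-(2 : ℝ) - (ℓ : ℝ)) *
        ∫ s in Set.Ioc r₀ r, s ^ ((2 : ℝ) + (ℓ : ℝ)) * |f s|) atTop (nhds 0)) :
    Tendsto (fun r => r ^ ((ℓ : ℝ) - 1) * ∫ s in Set.Ioi r, s ^ ((1 : ℝ) - (ℓ : ℝ)) * f s)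
      atTop (nhds 0) := by
  have hℓ1 : (1:ℝ) ≤ (ℓ:ℝ) - 1 := by
    have : (2:ℝ) ≤ (ℓ:ℝ) := by exact_mod_cast hℓ
    linarith
  set a : ℝ := 2 + (ℓ:ℝ) with ha
  set c : ℝ := 1 + 2 * (ℓ:ℝ) with hc
  have hac : a - c = 1 - (ℓ:ℝ) := by rw [ha, hc]; ring
  set K : ℝ := 2 + c / ((ℓ:ℝ) - 1) with hK
  have hKpos : 0 < K := by
    have h1 : 0 < (ℓ:ℝ) - 1 := by linarith
    have h2 : 0 < c := by rw [hc]; positivity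
    rw [hK]
    linarith [div_pos h2 h1]
  rw [NormedAddCommGroup.tendsto_nhds_zero]
  intro ε hε
  set δ : ℝ := ε / (2 * K) with hδ
  have hδpos : 0 < δ := by positivity
  -- from hgrow: eventually F s ≤ δ * s ^ a
  have hgrow' : ∀ᶠ s in atTop,
      s ^ (-(2:ℝ) - (ℓ:ℝ)) * (∫ t in Set.Ioc r₀ s, t ^ a * |f t|) ≤ δ := by
    have := hgrow.eventually (eventually_le_nhds hδpos)
    simpa [ha] using this
  obtain ⟨r₁, hr₁⟩ := (hgrow'.and (eventually_gt_atTop (max r₀ 1))).exists_forall_of_atTop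
  filter_upwards [eventually_ge_atTop r₁, eventually_gt_atTop (max r₀ 1)] with r hrr₁ hrbig
  have hr0 : (0:ℝ) < r := lt_trans (lt_of_lt_of_le zero_lt_one (le_max_right r₀ 1)) hrbig
  have hrr₀ : r₀ < r := lt_of_le_of_lt (le_max_left r₀ 1) hrbig
  -- bound on |G s| for s ≥ r
  have hGb : ∀ s, r ≤ s → |∫ t in r₀..s, t ^ a * f t| ≤ δ * s ^ a := by
    intro s hs
    have hs0 : (0:ℝ) < s := lt_of_lt_of_le hr0 hs
    have hsr₀ : r₀ ≤ s := (hrr₀.trans_le hs).le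
    rw [intervalIntegral.integral_of_le hsr₀]
    have h1 : |∫ t in Set.Ioc r₀ s, t ^ a * f t| ≤ ∫ t in Set.Ioc r₀ s, t ^ a * |f t| :=
      aux_abs_int r₀ s a hr₀ f
    have h2 : s ^ (-(2:ℝ) - (ℓ:ℝ)) * (∫ t in Set.Ioc r₀ s, t ^ a * |f t|) ≤ δ :=
      (hr₁ s (le_trans hrr₁ hs)).1
    have h3 : s ^ (-(2:ℝ) - (ℓ:ℝ)) = (s ^ a)⁻¹ := by
      rw [ha, ← Real.rpow_neg hs0.le]; congr 1; ring
    have hsa : (0:ℝ) < s ^ a := Real.rpow_pos_of_pos hs0 a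
    rw [h3] at h2
    calc |∫ t in Set.Ioc r₀ s, t ^ a * f t| ≤ ∫ t in Set.Ioc r₀ s, t ^ a * |f t| := h1
      _ ≤ δ * s ^ a := by
          have h4 : s ^ a * ((s ^ a)⁻¹ * ∫ t in Set.Ioc r₀ s, t ^ a * |f t|) ≤ s ^ a * δ :=
            mul_le_mul_of_nonneg_left h2 hsa.le
          rw [← mul_assoc, mul_inv_cancel₀ hsa.ne', one_mul] at h4
          linarith
  -- continuity of the primitive
  have hGcont : ContinuousOn (fun x => ∫ s in r₀..x, s ^ a * f s) (Set.Ioi r₀) :=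
    fun x hx => ((aux_Gderiv r₀ a hr₀ f hf hx).continuousAt).continuousWithinAt
  -- main bound on partial integrals
  have hbound : ∀ R, r ≤ R →
      |∫ x in r..R, x ^ ((1:ℝ) - (ℓ:ℝ)) * f x| ≤ δ * K * r ^ ((1:ℝ) - (ℓ:ℝ)) := by
    intro R hR
    have hR0 : (0:ℝ) < R := hr0.trans_le hR
    have hibp := aux_ibp r₀ a c hr₀ f hf r R hrr₀ hR
    rw [hac] at hibp
    have hIccIoi : Set.Icc r R ⊆ Set.Ioi r₀ := fun x hx => lt_of_lt_of_le hrr₀ hx.1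
    -- term 1
    have ht1 : |R ^ (-c) * ∫ s in r₀..R, s ^ a * f s| ≤ δ * r ^ ((1:ℝ) - (ℓ:ℝ)) := by
      have h1 : R ^ (-c) * |∫ s in r₀..R, s ^ a * f s| ≤ R ^ (-c) * (δ * R ^ a) :=
        mul_le_mul_of_nonneg_left (hGb R hR) (Real.rpow_nonneg hR0.le _)
      have h2 : R ^ (-c) * (δ * R ^ a) = δ * R ^ ((1:ℝ) - (ℓ:ℝ)) := by
        rw [← hac, mul_comm (R ^ (-c)), mul_assoc, ← Real.rpow_add hR0]
        ring_nf
      have h3 : R ^ ((1:ℝ) - (ℓ:ℝ)) ≤ r ^ ((1:ℝ) - (ℓ:ℝ)) :=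
        Real.rpow_le_rpow_of_nonpos hr0 hR (by linarith)
      rw [abs_mul, abs_of_nonneg (Real.rpow_nonneg hR0.le (-c))]
      calc R ^ (-c) * |∫ s in r₀..R, s ^ a * f s| ≤ δ * R ^ ((1:ℝ) - (ℓ:ℝ)) := by
            rw [← h2]; exact h1
        _ ≤ δ * r ^ ((1:ℝ) - (ℓ:ℝ)) := mul_le_mul_of_nonneg_left h3 hδpos.le
    -- term 2
    have ht2 : |r ^ (-c) * ∫ s in r₀..r, s ^ a * f s| ≤ δ * r ^ ((1:ℝ) - (ℓ:ℝ)) := by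
      have h1 : r ^ (-c) * |∫ s in r₀..r, s ^ a * f s| ≤ r ^ (-c) * (δ * r ^ a) :=
        mul_le_mul_of_nonneg_left (hGb r le_rfl) (Real.rpow_nonneg hr0.le _)
      have h2 : r ^ (-c) * (δ * r ^ a) = δ * r ^ ((1:ℝ) - (ℓ:ℝ)) := by
        rw [← hac, mul_comm (r ^ (-c)), mul_assoc, ← Real.rpow_add hr0]
        ring_nf
      rw [abs_mul, abs_of_nonneg (Real.rpow_nonneg hr0.le (-c))]
      rw [← h2]; exact h1
    -- term 3
    have ht3 : |∫ x in r..R, x ^ (-c - 1) * ∫ s in r₀..x, s ^ a * f s|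
        ≤ δ * r ^ ((1:ℝ) - (ℓ:ℝ)) / ((ℓ:ℝ) - 1) := by
      have habs : |∫ x in r..R, x ^ (-c - 1) * ∫ s in r₀..x, s ^ a * f s|
          ≤ ∫ x in r..R, |x ^ (-c - 1) * ∫ s in r₀..x, s ^ a * f s| :=
        intervalIntegral.abs_integral_le_integral_abs hR
      have hint1 : IntervalIntegrable
          (fun x => |x ^ (-c - 1) * ∫ s in r₀..x, s ^ a * f s|) volume r R := by
        apply ContinuousOn.intervalIntegrable
        rw [Set.uIcc_of_le hR]
        apply ContinuousOn.abs
        exact ((continuousOn_id.rpow_const (fun x hx => Or.inl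
          (ne_of_gt (hr₀.trans (hIccIoi hx)))))).mul (hGcont.mono hIccIoi)
      have hint2 : IntervalIntegrable (fun x : ℝ => δ * x ^ (-(ℓ:ℝ))) volume r R := by
        apply ContinuousOn.intervalIntegrable
        rw [Set.uIcc_of_le hR]
        exact continuousOn_const.mul (continuousOn_id.rpow_const (fun x hx => Or.inl
          (ne_of_gt (hr₀.trans (hIccIoi hx)))))
      have hmono : ∫ x in r..R, |x ^ (-c - 1) * ∫ s in r₀..x, s ^ a * f s|
          ≤ ∫ x in r..R, δ * x ^ (-(ℓ:ℝ)) := by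
        apply intervalIntegral.integral_mono_on hR hint1 hint2
        intro x hx
        have hx0 : (0:ℝ) < x := hr0.trans_le hx.1
        have hxr : r ≤ x := hx.1
        rw [abs_mul, abs_of_nonneg (Real.rpow_nonneg hx0.le _)]
        calc x ^ (-c - 1) * |∫ s in r₀..x, s ^ a * f s|
            ≤ x ^ (-c - 1) * (δ * x ^ a) :=
              mul_le_mul_of_nonneg_left (hGb x hxr) (Real.rpow_nonneg hx0.le _)
          _ = δ * x ^ (-(ℓ:ℝ)) := by
              rw [mul_comm (x ^ (-c-1)), mul_assoc, ← Real.rpow_add hx0]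
              congr 2
              rw [ha, hc]; ring
      have hval : ∫ x in r..R, δ * x ^ (-(ℓ:ℝ))
          = δ * ((R ^ (-(ℓ:ℝ) + 1) - r ^ (-(ℓ:ℝ) + 1)) / (-(ℓ:ℝ) + 1)) := by
        rw [intervalIntegral.integral_const_mul, integral_rpow]
        right
        constructor
        · intro h
          have : (ℓ:ℝ) = 1 := by linarith [neg_eq_iff_eq_neg.mp h]
          linarith
        · rw [Set.uIcc_of_le hR]
          intro h
          exact absurd h.1 (not_le.mpr hr0)
      have hfin : δ * ((R ^ (-(ℓ:ℝ) + 1) - r ^ (-(ℓ:ℝ) + 1)) / (-(ℓ:ℝ) + 1))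
          ≤ δ * r ^ ((1:ℝ) - (ℓ:ℝ)) / ((ℓ:ℝ) - 1) := by
        have hRpow : (0:ℝ) ≤ R ^ (-(ℓ:ℝ) + 1) := Real.rpow_nonneg hR0.le _
        have hrpow : r ^ (-(ℓ:ℝ) + 1) = r ^ ((1:ℝ) - (ℓ:ℝ)) := by congr 1; ring
        have hl1 : (0:ℝ) < (ℓ:ℝ) - 1 := by linarith
        have heq : (R ^ (-(ℓ:ℝ) + 1) - r ^ (-(ℓ:ℝ) + 1)) / (-(ℓ:ℝ) + 1)
            = (r ^ (-(ℓ:ℝ) + 1) - R ^ (-(ℓ:ℝ) + 1)) / ((ℓ:ℝ) - 1) := by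
          have h2 : ((ℓ:ℝ) - 1) ≠ 0 := ne_of_gt hl1
          have h3 : (-(ℓ:ℝ) + 1) ≠ 0 := by intro h; apply h2; linarith
          field_simp
          ring
        rw [heq, ← hrpow, mul_div_assoc]
        apply mul_le_mul_of_nonneg_left _ hδpos.le
        rw [div_le_div_iff₀ hl1 hl1]
        nlinarith [hRpow, hl1]
      linarith
    -- combine the three bounds
    set A := R ^ (-c) * ∫ s in r₀..R, s ^ a * f s with hA
    set B := r ^ (-c) * ∫ s in r₀..r, s ^ a * f s with hB
    set I3 := ∫ x in r..R, x ^ (-c - 1) * ∫ s in r₀..x, s ^ a * f s with hI3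
    have hc0 : (0:ℝ) ≤ c := by rw [hc]; positivity
    have htri : |A - B + c * I3| ≤ |A| + |B| + c * |I3| := by
      calc |A - B + c * I3| ≤ |A - B| + |c * I3| := abs_add_le _ _
        _ ≤ |A| + |B| + c * |I3| := by
            rw [abs_mul, abs_of_nonneg hc0]
            have h4 : |A - B| ≤ |A| + |B| := abs_sub _ _
            linarith
    have hKeq : δ * r ^ ((1:ℝ) - (ℓ:ℝ)) + δ * r ^ ((1:ℝ) - (ℓ:ℝ))
        + c * (δ * r ^ ((1:ℝ) - (ℓ:ℝ)) / ((ℓ:ℝ) - 1)) = δ * K * r ^ ((1:ℝ) - (ℓ:ℝ)) := by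
      have h2 : ((ℓ:ℝ) - 1) ≠ 0 := by
        have : (2:ℝ) ≤ (ℓ:ℝ) := by exact_mod_cast hℓ
        intro h; linarith
      rw [hK]
      field_simp
      ring
    rw [hibp]
    have hc3 : c * |I3| ≤ c * (δ * r ^ ((1:ℝ) - (ℓ:ℝ)) / ((ℓ:ℝ) - 1)) :=
      mul_le_mul_of_nonneg_left ht3 hc0
    calc |A - B + c * I3| ≤ |A| + |B| + c * |I3| := htri
      _ ≤ δ * r ^ ((1:ℝ) - (ℓ:ℝ)) + δ * r ^ ((1:ℝ) - (ℓ:ℝ))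
          + c * (δ * r ^ ((1:ℝ) - (ℓ:ℝ)) / ((ℓ:ℝ) - 1)) := by linarith
      _ = δ * K * r ^ ((1:ℝ) - (ℓ:ℝ)) := hKeq
  -- pass to the limit R → ∞
  have hIntr : IntegrableOn (fun s => s ^ ((1:ℝ) - (ℓ:ℝ)) * f s) (Set.Ioi r) :=
    hint.mono_set (Set.Ioi_subset_Ioi hrr₀.le)
  have hTlim := MeasureTheory.intervalIntegral_tendsto_integral_Ioi r hIntr tendsto_id
  have hTabs : |∫ s in Set.Ioi r, s ^ ((1:ℝ) - (ℓ:ℝ)) * f s| ≤ δ * K * r ^ ((1:ℝ) - (ℓ:ℝ)) := by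
    apply le_of_tendsto hTlim.abs
    filter_upwards [eventually_ge_atTop r] with R hR using hbound R hR
  have hone : r ^ ((ℓ:ℝ) - 1) * r ^ ((1:ℝ) - (ℓ:ℝ)) = 1 := by
    rw [← Real.rpow_add hr0]
    norm_num
  rw [Real.norm_eq_abs, abs_mul, abs_of_nonneg (Real.rpow_nonneg hr0.le _)]
  have hfinal : r ^ ((ℓ:ℝ) - 1) * |∫ s in Set.Ioi r, s ^ ((1:ℝ) - (ℓ:ℝ)) * f s|
      ≤ δ * K := by
    calc r ^ ((ℓ:ℝ) - 1) * |∫ s in Set.Ioi r, s ^ ((1:ℝ) - (ℓ:ℝ)) * f s|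
        ≤ r ^ ((ℓ:ℝ) - 1) * (δ * K * r ^ ((1:ℝ) - (ℓ:ℝ))) :=
          mul_le_mul_of_nonneg_left hTabs (Real.rpow_nonneg hr0.le _)
      _ = (r ^ ((ℓ:ℝ) - 1) * r ^ ((1:ℝ) - (ℓ:ℝ))) * (δ * K) := by ring
      _ = δ * K := by rw [hone, one_mul]
  have hδK : δ * K = ε / 2 := by
    rw [hδ]
    field_simp
  have hlt : δ * K < ε := by rw [hδK]; linarith
  exact lt_of_le_of_lt hfinal hlt


lemma aux_tail1 (r₀ : ℝ) (g : ℝ → ℝ) (hint : IntegrableOn g (Set.Ioi r₀)) :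
    Tendsto (fun r => ∫ s in Set.Ioi r, g s) atTop (nhds 0) := by
  have h := MeasureTheory.intervalIntegral_tendsto_integral_Ioi r₀ hint tendsto_id
  have hev : (fun r => (∫ s in Set.Ioi r₀, g s) - ∫ s in r₀..r, g s)
      =ᶠ[atTop] fun r => ∫ s in Set.Ioi r, g s := by
    filter_upwards [eventually_ge_atTop r₀] with r hr
    rw [intervalIntegral.integral_of_le hr]
    have hsplit : (∫ s in Set.Ioi r₀, g s)
        = (∫ s in Set.Ioc r₀ r, g s) + ∫ s in Set.Ioi r, g s := by
      rw [← setIntegral_union (Set.Ioc_disjoint_Ioi le_rfl) measurableSet_Ioi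
          (hint.mono_set Set.Ioc_subset_Ioi_self) (hint.mono_set (Set.Ioi_subset_Ioi hr)),
        Set.Ioc_union_Ioi_eq_Ioi hr]
    linarith
  have h2 : Tendsto (fun r => (∫ s in Set.Ioi r₀, g s) - ∫ s in r₀..r, g s) atTop
      (nhds ((∫ s in Set.Ioi r₀, g s) - ∫ s in Set.Ioi r₀, g s)) :=
    tendsto_const_nhds.sub h
  rw [sub_self] at h2
  exact h2.congr' hev

lemma aux_A (ℓ : ℕ) (r₀ : ℝ) (hr₀ : 0 < r₀) (f : ℝ → ℝ)
    (hgrow : Tendsto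
      (fun r => r ^ (-(2 : ℝ) - (ℓ : ℝ)) *
        ∫ s in Set.Ioc r₀ r, s ^ ((2 : ℝ) + (ℓ : ℝ)) * |f s|) atTop (nhds 0)) :
    Tendsto (fun r => r ^ (-(2 : ℝ) - (ℓ : ℝ)) *
        ∫ s in Set.Ioc r₀ r, s ^ ((2 : ℝ) + (ℓ : ℝ)) * f s) atTop (nhds 0) := by
  apply squeeze_zero_norm' _ hgrow
  filter_upwards [eventually_ge_atTop (0:ℝ)] with r hr
  rw [Real.norm_eq_abs, abs_mul, abs_of_nonneg (Real.rpow_nonneg hr _)]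
  exact mul_le_mul_of_nonneg_left (aux_abs_int r₀ r _ hr₀ f) (Real.rpow_nonneg hr _)

end Aux

/-- under the zero-moment condition and the growth condition
r^{−2−ℓ} ∫_{r₀}^r s^{2+ℓ}|f| → 0, the explicit solutions decay at infinity. -/
theorem stmt10 (ℓ : ℕ) (hℓ : 1 ≤ ℓ) (r₀ : ℝ) (hr₀ : 0 < r₀) (f : ℝ → ℝ)
    (hf : ContinuousOn f (Set.Ici r₀))
    (hint : IntegrableOn (fun s => s ^ ((1 : ℝ) - (ℓ : ℝ)) * f s) (Set.Ioi r₀))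
    (Vr V₁ : ℝ → ℝ)
    (hVr : ∀ r, Vr r =
      ((ℓ : ℝ) * ((ℓ : ℝ) + 1) / r ^ ((2 : ℝ) + (ℓ : ℝ))) *
        (∫ s in Set.Ioc r₀ r, s ^ ((2 : ℝ) + (ℓ : ℝ)) * f s) +
      (ℓ : ℝ) * ((ℓ : ℝ) + 1) * r ^ ((ℓ : ℝ) - 1) *
        (∫ s in Set.Ioi r, s ^ ((1 : ℝ) - (ℓ : ℝ)) * f s))
    (hV₁ : ∀ r, V₁ r =
      -((ℓ : ℝ) / r ^ ((2 : ℝ) + (ℓ : ℝ))) *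
        (∫ s in Set.Ioc r₀ r, s ^ ((2 : ℝ) + (ℓ : ℝ)) * f s) +
      ((ℓ : ℝ) + 1) * r ^ ((ℓ : ℝ) - 1) *
        (∫ s in Set.Ioi r, s ^ ((1 : ℝ) - (ℓ : ℝ)) * f s))
    (hmom : (∫ s in Set.Ioi r₀, s ^ ((1 : ℝ) - (ℓ : ℝ)) * f s) = 0)
    (hgrow : Tendsto
      (fun r => r ^ (-(2 : ℝ) - (ℓ : ℝ)) *
        ∫ s in Set.Ioc r₀ r, s ^ ((2 : ℝ) + (ℓ : ℝ)) * |f s|) atTop (nhds 0)) :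
    Tendsto Vr atTop (nhds 0) ∧ Tendsto V₁ atTop (nhds 0) := by
  have hA := aux_A ℓ r₀ hr₀ f hgrow
  have hB : Tendsto (fun r => r ^ ((ℓ : ℝ) - 1) *
      ∫ s in Set.Ioi r, s ^ ((1 : ℝ) - (ℓ : ℝ)) * f s) atTop (nhds 0) := by
    rcases eq_or_lt_of_le hℓ with h1 | h2
    · obtain rfl : ℓ = 1 := h1.symm
      simpa using aux_tail1 r₀ _ hint
    · exact aux_tail2 ℓ h2 r₀ hr₀ f hf hint hgrow
  have key : ∀ c₁ c₂ : ℝ, ∀ V : ℝ → ℝ,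
      (∀ r : ℝ, 0 < r → V r =
        c₁ * (r ^ (-(2:ℝ) - (ℓ:ℝ)) * ∫ s in Set.Ioc r₀ r, s ^ ((2:ℝ) + (ℓ:ℝ)) * f s)
        + c₂ * (r ^ ((ℓ:ℝ) - 1) * ∫ s in Set.Ioi r, s ^ ((1:ℝ) - (ℓ:ℝ)) * f s)) →
      Tendsto V atTop (nhds 0) := by
    intro c₁ c₂ V hV
    have h0 := (hA.const_mul c₁).add (hB.const_mul c₂)
    rw [mul_zero, mul_zero, add_zero] at h0
    apply h0.congr'
    filter_upwards [eventually_gt_atTop (0:ℝ)] with r hr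
    exact (hV r hr).symm
  constructor
  · apply key ((ℓ:ℝ) * ((ℓ:ℝ) + 1)) ((ℓ:ℝ) * ((ℓ:ℝ) + 1)) Vr
    intro r hr
    rw [hVr r]
    have hrinv : r ^ (-(2:ℝ) - (ℓ:ℝ)) = (r ^ ((2:ℝ) + (ℓ:ℝ)))⁻¹ := by
      rw [show (-(2:ℝ) - (ℓ:ℝ)) = -((2:ℝ) + (ℓ:ℝ)) by ring, Real.rpow_neg hr.le]
    rw [hrinv, div_eq_mul_inv]
    ring
  · apply key (-(ℓ:ℝ)) ((ℓ:ℝ) + 1) V₁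
    intro r hr
    rw [hV₁ r]
    have hrinv : r ^ (-(2:ℝ) - (ℓ:ℝ)) = (r ^ ((2:ℝ) + (ℓ:ℝ)))⁻¹ := by
      rw [show (-(2:ℝ) - (ℓ:ℝ)) = -((2:ℝ) + (ℓ:ℝ)) by ring, Real.rpow_neg hr.le]
    rw [hrinv, div_eq_mul_inv]
    ring
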